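/- arXiv:2512.19112 — 2 statements merged into one kernel-verified Lean document; each statement's English description precedes it below -/
import Mathlib

section
/- Consider the hyperplane arrangement in $\mathbb{R}^3$ restricted to the open cube $(0,1)^3$ consisting of the hyperplanes $x_1 + x_2 + x_3 = 1$, $x_1 + x_2 + x_3 = 2$, $x_1 + x_2 = 1$, $x_1 + x_3 = 1$, $x_2 + x_3 = 1$. The complement of the union of these hyperplanes in the open cube has exactly $10$ connected components. -/
open Set

/-- The open region set in the cube. -/
def Us : Set (Fin 3 → ℝ) := {x | (∀ i, 0 < x i ∧ x i < 1) ∧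
      x 0 + x 1 + x 2 ≠ 1 ∧ x 0 + x 1 + x 2 ≠ 2 ∧
      x 0 + x 1 ≠ 1 ∧ x 0 + x 2 ≠ 1 ∧ x 1 + x 2 ≠ 1}

abbrev B5 := Bool × Bool × Bool × Bool × Bool

noncomputable def sgn (x : Fin 3 → ℝ) : B5 :=
  (decide (x 0 + x 1 + x 2 < 1), decide (x 0 + x 1 + x 2 < 2),
   decide (x 0 + x 1 < 1), decide (x 0 + x 2 < 1), decide (x 1 + x 2 < 1))

def enc (b : B5) : ℕ :=
  (cond b.1 16 0) + (cond b.2.1 8 0) + (cond b.2.2.1 4 0) +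
  (cond b.2.2.2.1 2 0) + (cond b.2.2.2.2 1 0)

lemma enc_inj : Function.Injective enc := by decide

def cnd (b : Bool) (a c : ℝ) : Prop := if b then a < c else c < a

def Ob (b : B5) : Set (Fin 3 → ℝ) :=
  {x | (∀ i, 0 < x i ∧ x i < 1) ∧ cnd b.1 (x 0 + x 1 + x 2) 1 ∧
    cnd b.2.1 (x 0 + x 1 + x 2) 2 ∧ cnd b.2.2.1 (x 0 + x 1) 1 ∧
    cnd b.2.2.2.1 (x 0 + x 2) 1 ∧ cnd b.2.2.2.2 (x 1 + x 2) 1}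

lemma cnd_open (b : Bool) (l : (Fin 3 → ℝ) → ℝ) (hl : Continuous l) (c : ℝ) :
    IsOpen {x | cnd b (l x) c} := by
  cases b
  · simpa [cnd] using isOpen_lt continuous_const hl
  · simpa [cnd] using isOpen_lt hl continuous_const

lemma cube_open : IsOpen {x : Fin 3 → ℝ | ∀ i, 0 < x i ∧ x i < 1} := by
  rw [Set.setOf_forall]
  refine isOpen_iInter_of_finite fun i => ?_
  rw [Set.setOf_and]
  exact (isOpen_lt continuous_const (continuous_apply i)).inter
    (isOpen_lt (continuous_apply i) continuous_const)

lemma Ob_open (b : B5) : IsOpen (Ob b) := by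
  have c1 : Continuous fun x : Fin 3 → ℝ => x 0 + x 1 + x 2 := by fun_prop
  have c2 : Continuous fun x : Fin 3 → ℝ => x 0 + x 1 := by fun_prop
  have c3 : Continuous fun x : Fin 3 → ℝ => x 0 + x 2 := by fun_prop
  have c4 : Continuous fun x : Fin 3 → ℝ => x 1 + x 2 := by fun_prop
  simp only [Ob, Set.setOf_and]
  exact cube_open.inter ((cnd_open _ _ c1 1).inter ((cnd_open _ _ c1 2).inter
    ((cnd_open _ _ c2 1).inter ((cnd_open _ _ c3 1).inter (cnd_open _ _ c4 1)))))

lemma lin_apply (i : Fin 3) : IsLinearMap ℝ (fun x : Fin 3 → ℝ => x i) :=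
  ⟨fun a b => rfl, fun c a => rfl⟩

lemma cnd_convex (b : Bool) (l : (Fin 3 → ℝ) → ℝ) (hl : IsLinearMap ℝ l) (c : ℝ) :
    Convex ℝ {x | cnd b (l x) c} := by
  cases b
  · simpa [cnd] using convex_halfSpace_gt hl c
  · simpa [cnd] using convex_halfSpace_lt hl c

lemma cube_convex : Convex ℝ {x : Fin 3 → ℝ | ∀ i, 0 < x i ∧ x i < 1} := by
  rw [Set.setOf_forall]
  refine convex_iInter fun i => ?_
  rw [Set.setOf_and]
  exact (convex_halfSpace_gt (lin_apply i) 0).inter (convex_halfSpace_lt (lin_apply i) 1)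

lemma lin1 : IsLinearMap ℝ (fun x : Fin 3 → ℝ => x 0 + x 1 + x 2) :=
  ⟨fun a b => by simp [Pi.add_apply]; ring, fun c a => by simp [Pi.smul_apply, smul_eq_mul]; ring⟩
lemma lin2 : IsLinearMap ℝ (fun x : Fin 3 → ℝ => x 0 + x 1) :=
  ⟨fun a b => by simp [Pi.add_apply]; ring, fun c a => by simp [Pi.smul_apply, smul_eq_mul]; ring⟩
lemma lin3 : IsLinearMap ℝ (fun x : Fin 3 → ℝ => x 0 + x 2) :=
  ⟨fun a b => by simp [Pi.add_apply]; ring, fun c a => by simp [Pi.smul_apply, smul_eq_mul]; ring⟩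
lemma lin4 : IsLinearMap ℝ (fun x : Fin 3 → ℝ => x 1 + x 2) :=
  ⟨fun a b => by simp [Pi.add_apply]; ring, fun c a => by simp [Pi.smul_apply, smul_eq_mul]; ring⟩

lemma Ob_convex (b : B5) : Convex ℝ (Ob b) := by
  simp only [Ob, Set.setOf_and]
  exact cube_convex.inter ((cnd_convex _ _ lin1 1).inter ((cnd_convex _ _ lin1 2).inter
    ((cnd_convex _ _ lin2 1).inter ((cnd_convex _ _ lin3 1).inter (cnd_convex _ _ lin4 1)))))

lemma Ob_subset (b : B5) : Ob b ⊆ Us := by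
  rintro x ⟨hc, h1, h2, h3, h4, h5⟩
  refine ⟨hc, ?_, ?_, ?_, ?_, ?_⟩ <;>
  · first
    | (revert h1; cases b.1 <;> simp [cnd] <;> intro h <;> [exact ne_of_gt h; exact ne_of_lt h])
    | (revert h2; cases b.2.1 <;> simp [cnd] <;> intro h <;> [exact ne_of_gt h; exact ne_of_lt h])
    | (revert h3; cases b.2.2.1 <;> simp [cnd] <;> intro h <;> [exact ne_of_gt h; exact ne_of_lt h])
    | (revert h4; cases b.2.2.2.1 <;> simp [cnd] <;> intro h <;> [exact ne_of_gt h; exact ne_of_lt h])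
    | (revert h5; cases b.2.2.2.2 <;> simp [cnd] <;> intro h <;> [exact ne_of_gt h; exact ne_of_lt h])

lemma decide_cnd {p : Bool} {a c : ℝ} (h : a ≠ c) : (decide (a < c) = p) ↔ cnd p a c := by
  cases p
  · simp only [cnd, if_neg Bool.false_ne_true, decide_eq_false_iff_not, not_lt]
    exact ⟨fun h' => lt_of_le_of_ne h' (Ne.symm h), le_of_lt⟩
  · simp [cnd]

lemma sgn_eq_iff {x : Fin 3 → ℝ} (hx : x ∈ Us) (b : B5) : sgn x = b ↔ x ∈ Ob b := by
  obtain ⟨hc, h1, h2, h3, h4, h5⟩ := hx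
  obtain ⟨b1, b2, b3, b4, b5⟩ := b
  simp only [sgn, Ob, Set.mem_setOf_eq, Prod.mk.injEq, hc, true_and]
  rw [decide_cnd h1, decide_cnd h2, decide_cnd h3, decide_cnd h4, decide_cnd h5]
  tauto

def F : Finset ℕ := {0, 8, 9, 10, 11, 12, 13, 14, 15, 31}

lemma code_mem {x : Fin 3 → ℝ} (hx : x ∈ Us) : enc (sgn x) ∈ F := by
  obtain ⟨hc, h1, h2, h3, h4, h5⟩ := hx
  have hx0 := hc 0; have hx1 := hc 1; have hx2 := hc 2
  by_cases H1 : x 0 + x 1 + x 2 < 1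
  · have p2 : x 0 + x 1 + x 2 < 2 := by linarith [hx0.1, hx1.1, hx2.1]
    have p3 : x 0 + x 1 < 1 := by linarith [hx2.1]
    have p4 : x 0 + x 2 < 1 := by linarith [hx1.1]
    have p5 : x 1 + x 2 < 1 := by linarith [hx0.1]
    simp [sgn, enc, H1, p2, p3, p4, p5, F]
  · by_cases H2 : x 0 + x 1 + x 2 < 2
    · by_cases H3 : x 0 + x 1 < 1 <;> by_cases H4 : x 0 + x 2 < 1 <;>
        by_cases H5 : x 1 + x 2 < 1 <;>
        simp [sgn, enc, H1, H2, H3, H4, H5, F]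
    · have hge : (2:ℝ) ≤ x 0 + x 1 + x 2 := not_lt.mp H2
      have p3 : ¬ (x 0 + x 1 < 1) := by push_neg; linarith [hx2.2]
      have p4 : ¬ (x 0 + x 2 < 1) := by push_neg; linarith [hx1.2]
      have p5 : ¬ (x 1 + x 2 < 1) := by push_neg; linarith [hx0.2]
      simp [sgn, enc, H1, H2, p3, p4, p5, F]

lemma main : Nat.card (ConnectedComponents ↥Us) = 10 := by
  -- the locally constant code function
  have hsgn_lc : IsLocallyConstant (fun u : ↥Us => sgn u.val) := by
    rw [IsLocallyConstant.iff_isOpen_fiber]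
    intro b
    have : ((fun u : ↥Us => sgn u.val) ⁻¹' {b}) = Subtype.val ⁻¹' (Ob b) := by
      ext u; simpa using sgn_eq_iff u.2 b
    rw [this]
    exact (Ob_open b).preimage continuous_subtype_val
  have hf_lc : IsLocallyConstant (fun u : ↥Us => enc (sgn u.val)) := hsgn_lc.comp enc
  have hf : Continuous (fun u : ↥Us => enc (sgn u.val)) := hf_lc.continuous
  set g : ConnectedComponents ↥Us → ℕ := hf.connectedComponentsLift with hg
  have hgcoe : ∀ u : ↥Us, g (ConnectedComponents.mk u) = enc (sgn u.val) := fun u =>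
    hf.connectedComponentsLift_apply_coe u
  have hmem : ∀ q, g q ∈ F := by
    intro q
    obtain ⟨u, rfl⟩ := ConnectedComponents.surjective_coe q
    rw [hgcoe]; exact code_mem u.2
  set G : ConnectedComponents ↥Us → ↥F := fun q => ⟨g q, hmem q⟩ with hG
  have hpre : ∀ b : B5, IsPreconnected (Subtype.val ⁻¹' (Ob b) : Set ↥Us) := by
    intro b
    rw [← Topology.IsInducing.subtypeVal.isPreconnected_image]
    have : (Subtype.val '' (Subtype.val ⁻¹' (Ob b) : Set ↥Us)) = Ob b := by
      rw [Subtype.image_preimage_coe, Set.inter_eq_right.mpr (Ob_subset b)]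
    rw [this]
    exact (Ob_convex b).isPreconnected
  have hinj : Function.Injective G := by
    intro q1 q2 h
    obtain ⟨u, rfl⟩ := ConnectedComponents.surjective_coe q1
    obtain ⟨v, rfl⟩ := ConnectedComponents.surjective_coe q2
    have he : enc (sgn u.val) = enc (sgn v.val) := by
      have := congrArg Subtype.val h
      simpa [hG, hgcoe] using this
    have hb : sgn u.val = sgn v.val := enc_inj he
    set b := sgn u.val with hbdef
    have hu : u ∈ (Subtype.val ⁻¹' (Ob b) : Set ↥Us) := (sgn_eq_iff u.2 b).mp rfl
    have hv : v ∈ (Subtype.val ⁻¹' (Ob b) : Set ↥Us) := (sgn_eq_iff v.2 b).mp hb.symm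
    have := (hpre b).subset_connectedComponent hu hv
    exact (ConnectedComponents.coe_eq_coe).mpr (connectedComponent_eq this)
  have hsurj : Function.Surjective G := by
    rintro ⟨k, hk⟩
    fin_cases hk
    · -- 0 : point (9/10, 9/10, 9/10)
      refine ⟨ConnectedComponents.mk ⟨![9/10, 9/10, 9/10], ?_⟩, ?_⟩
      · refine ⟨fun i => by fin_cases i <;> norm_num, ?_, ?_, ?_, ?_, ?_⟩ <;> norm_num [Matrix.cons_val_two]
      · apply Subtype.ext
        simp only [hG, hgcoe]
        norm_num [sgn, enc, Matrix.cons_val_two]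
    · -- 8 : all pair sums > 1 : (11/20,11/20,11/20)
      refine ⟨ConnectedComponents.mk ⟨![11/20, 11/20, 11/20], ?_⟩, ?_⟩
      · refine ⟨fun i => by fin_cases i <;> norm_num, ?_, ?_, ?_, ?_, ?_⟩ <;> norm_num [Matrix.cons_val_two]
      · apply Subtype.ext
        simp only [hG, hgcoe]
        norm_num [sgn, enc, Matrix.cons_val_two]
    · -- 9 : x1+x2<1 only : (4/5, 2/5, 2/5)
      refine ⟨ConnectedComponents.mk ⟨![4/5, 2/5, 2/5], ?_⟩, ?_⟩
      · refine ⟨fun i => by fin_cases i <;> norm_num, ?_, ?_, ?_, ?_, ?_⟩ <;> norm_num [Matrix.cons_val_two]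
      · apply Subtype.ext
        simp only [hG, hgcoe]
        norm_num [sgn, enc, Matrix.cons_val_two]
    · -- 10 : x0+x2<1 only : (2/5, 4/5, 2/5)
      refine ⟨ConnectedComponents.mk ⟨![2/5, 4/5, 2/5], ?_⟩, ?_⟩
      · refine ⟨fun i => by fin_cases i <;> norm_num, ?_, ?_, ?_, ?_, ?_⟩ <;> norm_num [Matrix.cons_val_two]
      · apply Subtype.ext
        simp only [hG, hgcoe]
        norm_num [sgn, enc, Matrix.cons_val_two]
    · -- 11 : x0+x2<1, x1+x2<1 : (3/5, 3/5, 1/10)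
      refine ⟨ConnectedComponents.mk ⟨![3/5, 3/5, 1/10], ?_⟩, ?_⟩
      · refine ⟨fun i => by fin_cases i <;> norm_num, ?_, ?_, ?_, ?_, ?_⟩ <;> norm_num [Matrix.cons_val_two]
      · apply Subtype.ext
        simp only [hG, hgcoe]
        norm_num [sgn, enc, Matrix.cons_val_two]
    · -- 12 : x0+x1<1 only : (2/5, 2/5, 4/5)
      refine ⟨ConnectedComponents.mk ⟨![2/5, 2/5, 4/5], ?_⟩, ?_⟩
      · refine ⟨fun i => by fin_cases i <;> norm_num, ?_, ?_, ?_, ?_, ?_⟩ <;> norm_num [Matrix.cons_val_two]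
      · apply Subtype.ext
        simp only [hG, hgcoe]
        norm_num [sgn, enc, Matrix.cons_val_two]
    · -- 13 : x0+x1<1, x1+x2<1 : (3/5, 1/10, 3/5)
      refine ⟨ConnectedComponents.mk ⟨![3/5, 1/10, 3/5], ?_⟩, ?_⟩
      · refine ⟨fun i => by fin_cases i <;> norm_num, ?_, ?_, ?_, ?_, ?_⟩ <;> norm_num [Matrix.cons_val_two]
      · apply Subtype.ext
        simp only [hG, hgcoe]
        norm_num [sgn, enc, Matrix.cons_val_two]
    · -- 14 : x0+x1<1, x0+x2<1 : (1/10, 3/5, 3/5)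
      refine ⟨ConnectedComponents.mk ⟨![1/10, 3/5, 3/5], ?_⟩, ?_⟩
      · refine ⟨fun i => by fin_cases i <;> norm_num, ?_, ?_, ?_, ?_, ?_⟩ <;> norm_num [Matrix.cons_val_two]
      · apply Subtype.ext
        simp only [hG, hgcoe]
        norm_num [sgn, enc, Matrix.cons_val_two]
    · -- 15 : all pair sums < 1, total in (1,2) : (9/20,9/20,9/20)
      refine ⟨ConnectedComponents.mk ⟨![9/20, 9/20, 9/20], ?_⟩, ?_⟩
      · refine ⟨fun i => by fin_cases i <;> norm_num, ?_, ?_, ?_, ?_, ?_⟩ <;> norm_num [Matrix.cons_val_two]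
      · apply Subtype.ext
        simp only [hG, hgcoe]
        norm_num [sgn, enc, Matrix.cons_val_two]
    · -- 31 : total < 1 : (1/4,1/4,1/4)
      refine ⟨ConnectedComponents.mk ⟨![1/4, 1/4, 1/4], ?_⟩, ?_⟩
      · refine ⟨fun i => by fin_cases i <;> norm_num, ?_, ?_, ?_, ?_, ?_⟩ <;> norm_num [Matrix.cons_val_two]
      · apply Subtype.ext
        simp only [hG, hgcoe]
        norm_num [sgn, enc, Matrix.cons_val_two]
  rw [Nat.card_eq_of_bijective G ⟨hinj, hsurj⟩, Nat.card_eq_finsetCard]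
  rfl

/-- The complement, inside the open unit cube `(0,1)³`, of the five hyperplanes
`x₁+x₂+x₃ = 1`, `x₁+x₂+x₃ = 2`, `x₁+x₂ = 1`, `x₁+x₃ = 1`, `x₂+x₃ = 1`
has exactly 10 connected components. -/
theorem stmt_14
    (U : Set (Fin 3 → ℝ))
    (hU : U = {x | (∀ i, 0 < x i ∧ x i < 1) ∧
      x 0 + x 1 + x 2 ≠ 1 ∧ x 0 + x 1 + x 2 ≠ 2 ∧
      x 0 + x 1 ≠ 1 ∧ x 0 + x 2 ≠ 1 ∧ x 1 + x 2 ≠ 1}) :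
    Nat.card (ConnectedComponents U) = 10 := by
  subst hU
  exact main
end

section
/- Let $\Sigma(1) \subset N$ be a finite set of primitive lattice vectors closed under negation ($u \in \Sigma(1) \Rightarrow -u \in \Sigma(1)$) and spanning $N_\mathbb{R}$. Then for every $\theta \in M_\mathbb{R}$, the set $S_\theta = \{ k \mid \lceil \langle \theta, u \rangle \rceil - 1 < \langle k, u \rangle \le \lceil \langle \theta, u \rangle \rceil \ \forall u \in \Sigma(1) \}$ is relatively open in its affine hull, i.e., $S_\theta$ equals the relative interior of its closure. -/
open Finset in
/-- If the finite set of primitive ray generators is closed under negation and spans,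
then each Bondal stratum `S_θ` is relatively open in its affine hull: it equals the
relative (intrinsic) interior of its closure. -/
theorem stmt_15 (n : ℕ) (ι : Type*) [Fintype ι] (u : ι → (Fin n → ℤ))
    (hprim : ∀ ρ, (Finset.univ : Finset (Fin n)).gcd (fun i => (u ρ i).natAbs) = 1)
    (hneg : ∀ ρ, ∃ ρ', u ρ' = -u ρ)
    (hspan : Submodule.span ℝ (Set.range fun ρ => (fun i => ((u ρ i : ℝ)))) = ⊤)
    (pair : (Fin n → ℝ) → (Fin n → ℤ) → ℝ)
    (hpair : ∀ k v, pair k v = ∑ i, k i * (v i : ℝ))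
    (θ : Fin n → ℝ) (S : Set (Fin n → ℝ))
    (hS : S = {k | ∀ ρ,
      (⌈pair θ (u ρ)⌉ : ℝ) - 1 < pair k (u ρ) ∧ pair k (u ρ) ≤ (⌈pair θ (u ρ)⌉ : ℝ)}) :
    S = intrinsicInterior ℝ (closure S) := by
  classical
  set c : ι → ℝ := fun ρ => (⌈pair θ (u ρ)⌉ : ℝ) with hc
  have hSdef : S = {k | ∀ ρ, c ρ - 1 < pair k (u ρ) ∧ pair k (u ρ) ≤ c ρ} := hS
  have hSiff : ∀ k, k ∈ S ↔ ∀ ρ, c ρ - 1 < pair k (u ρ) ∧ pair k (u ρ) ≤ c ρ := by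
    intro k
    rw [hSdef]
    exact Iff.rfl
  clear hS
  -- basic algebraic facts about `pair`
  have hadd : ∀ (a b : Fin n → ℝ) ρ, pair (a + b) (u ρ) = pair a (u ρ) + pair b (u ρ) := by
    intro a b ρ
    simp [hpair, add_mul, Finset.sum_add_distrib]
  have hsub : ∀ (a b : Fin n → ℝ) ρ, pair (a - b) (u ρ) = pair a (u ρ) - pair b (u ρ) := by
    intro a b ρ
    simp [hpair, sub_mul, Finset.sum_sub_distrib]
  have hsmul : ∀ (t : ℝ) (a : Fin n → ℝ) ρ, pair (t • a) (u ρ) = t * pair a (u ρ) := by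
    intro t a ρ
    simp [hpair, Finset.mul_sum, mul_assoc]
  have hcont : ∀ ρ, Continuous fun k : Fin n → ℝ => pair k (u ρ) := by
    intro ρ
    simp only [hpair]
    exact continuous_finset_sum _ fun i _ => (continuous_apply i).mul continuous_const
  have hpairneg : ∀ ρ ρ', u ρ' = -u ρ → ∀ (k : Fin n → ℝ), pair k (u ρ') = -pair k (u ρ) := by
    intro ρ ρ' h k
    rw [hpair, hpair, h]
    simp [mul_neg, Finset.sum_neg_distrib]
  -- integrality predicate
  set I : ι → Prop := fun ρ => c ρ = pair θ (u ρ) with hI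
  have hcneg : ∀ ρ ρ', u ρ' = -u ρ → ((I ρ → c ρ' = -c ρ) ∧ (¬ I ρ → c ρ' = 1 - c ρ)) := by
    intro ρ ρ' h
    have hq : pair θ (u ρ') = -pair θ (u ρ) := hpairneg ρ ρ' h θ
    have hceil : c ρ' = ((-⌊pair θ (u ρ)⌋ : ℤ) : ℝ) := by
      show ((⌈pair θ (u ρ')⌉ : ℤ) : ℝ) = _
      rw [hq, Int.ceil_neg]
    have hcρ : c ρ = ((⌈pair θ (u ρ)⌉ : ℤ) : ℝ) := rfl
    constructor
    · intro hIρ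
      have hfloor : ⌊pair θ (u ρ)⌋ = ⌈pair θ (u ρ)⌉ := by
        have h' : pair θ (u ρ) = ((⌈pair θ (u ρ)⌉ : ℤ) : ℝ) := by
          rw [← hcρ]; exact hIρ.symm
        rw [h', Int.floor_intCast, Int.ceil_intCast]
      rw [hceil, hfloor, hcρ]
      push_cast
      ring
    · intro hIρ
      have hlt : pair θ (u ρ) < c ρ := by
        rcases lt_or_eq_of_le (Int.le_ceil (pair θ (u ρ))) with h' | h'
        · exact h'
        · exact absurd h'.symm hIρ
      have hfloor : ⌊pair θ (u ρ)⌋ = ⌈pair θ (u ρ)⌉ - 1 := by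
        have h1 : (⌊pair θ (u ρ)⌋ : ℝ) ≤ pair θ (u ρ) := Int.floor_le _
        have h2 : ⌈pair θ (u ρ)⌉ ≤ ⌊pair θ (u ρ)⌋ + 1 := Int.ceil_le_floor_add_one _
        have h3 : (⌊pair θ (u ρ)⌋ : ℝ) < (⌈pair θ (u ρ)⌉ : ℝ) := lt_of_le_of_lt h1 hlt
        have h4 : ⌊pair θ (u ρ)⌋ < ⌈pair θ (u ρ)⌉ := by exact_mod_cast h3
        omega
      rw [hceil, hfloor, hcρ]
      push_cast
      ring
  -- key structural fact about members of S
  have hSmem : ∀ x ∈ S, ∀ ρ, (I ρ → pair x (u ρ) = c ρ) ∧ (¬ I ρ → pair x (u ρ) < c ρ) := by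
    intro x hx ρ
    replace hx := (hSiff _).mp hx
    obtain ⟨ρ', hρ'⟩ := hneg ρ
    have h1 := hx ρ
    have h2 := hx ρ'
    have e : pair x (u ρ') = -pair x (u ρ) := hpairneg ρ ρ' hρ' x
    have hcc := hcneg ρ ρ' hρ'
    constructor
    · intro hIρ
      have := hcc.1 hIρ
      have h2' := h2.2
      rw [e, this] at h2'
      linarith [h1.2]
    · intro hIρ
      have := hcc.2 hIρ
      have h2' := h2.1
      rw [e, this] at h2'
      linarith
  -- the affine subspace cut out by the integral hyperplanes
  set A : AffineSubspace ℝ (Fin n → ℝ) :=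
    { carrier := {k | ∀ ρ, I ρ → pair k (u ρ) = c ρ}
      smul_vsub_vadd_mem' := by
        intro t p1 p2 p3 h1 h2 h3 ρ hρ
        have e1 := h1 ρ hρ
        have e2 := h2 ρ hρ
        have e3 := h3 ρ hρ
        show pair (t • (p1 -ᵥ p2) +ᵥ p3) (u ρ) = c ρ
        rw [vsub_eq_sub, vadd_eq_add, hadd, hsmul, hsub, e1, e2, e3]
        ring } with hA
  have hSA : S ⊆ (A : Set (Fin n → ℝ)) := by
    intro x hx ρ hρ
    exact (hSmem x hx ρ).1 hρ
  have hclosedA : IsClosed (A : Set (Fin n → ℝ)) := by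
    have : (A : Set (Fin n → ℝ)) = ⋂ ρ, {k | I ρ → pair k (u ρ) = c ρ} := by
      ext k
      simp only [Set.mem_iInter]
      exact Iff.rfl
    rw [this]
    refine isClosed_iInter fun ρ => ?_
    by_cases h : I ρ
    · have he : {k : Fin n → ℝ | I ρ → pair k (u ρ) = c ρ} = {k | pair k (u ρ) = c ρ} := by
        ext k
        exact ⟨fun hk => hk h, fun hk _ => hk⟩
      rw [he]
      exact isClosed_eq (hcont ρ) continuous_const
    · have he : {k : Fin n → ℝ | I ρ → pair k (u ρ) = c ρ} = Set.univ := by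
        ext k
        exact ⟨fun _ => trivial, fun _ hIρ => absurd hIρ h⟩
      rw [he]
      exact isClosed_univ
  have hclA : closure S ⊆ (A : Set (Fin n → ℝ)) := closure_minimal hSA hclosedA
  have hspanA : (affineSpan ℝ (closure S) : Set (Fin n → ℝ)) ⊆ (A : Set (Fin n → ℝ)) :=
    affineSpan_le.mpr hclA
  have hclosed2 : ∀ ρ, closure S ⊆ {k | c ρ - 1 ≤ pair k (u ρ) ∧ pair k (u ρ) ≤ c ρ} := by
    intro ρ
    refine closure_minimal ?_ ?_
    · intro x hx
      replace hx := (hSiff _).mp hx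
      exact ⟨le_of_lt (hx ρ).1, (hx ρ).2⟩
    · have : {k : Fin n → ℝ | c ρ - 1 ≤ pair k (u ρ) ∧ pair k (u ρ) ≤ c ρ}
          = {k | c ρ - 1 ≤ pair k (u ρ)} ∩ {k | pair k (u ρ) ≤ c ρ} := rfl
      rw [this]
      exact (isClosed_le continuous_const (hcont ρ)).inter
        (isClosed_le (hcont ρ) continuous_const)
  by_cases hne : S.Nonempty
  · ext x
    constructor
    · -- S ⊆ relint (closure S)
      intro hx
      have hxcl : x ∈ closure S := subset_closure hx
      rw [mem_intrinsicInterior]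
      refine ⟨⟨x, subset_affineSpan ℝ _ hxcl⟩, ?_, rfl⟩
      set V : Set (Fin n → ℝ) :=
        {k | ∀ ρ, ¬ I ρ → c ρ - 1 < pair k (u ρ) ∧ pair k (u ρ) < c ρ} with hV
      have hVopen : IsOpen V := by
        have : V = ⋂ ρ, {k | ¬ I ρ → c ρ - 1 < pair k (u ρ) ∧ pair k (u ρ) < c ρ} := by
          ext k
          simp only [Set.mem_iInter]
          exact Iff.rfl
        rw [this]
        refine isOpen_iInter_of_finite fun ρ => ?_
        by_cases h : I ρ
        · have he : {k : Fin n → ℝ | ¬ I ρ → c ρ - 1 < pair k (u ρ) ∧ pair k (u ρ) < c ρ}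
              = Set.univ := by
            ext k
            exact ⟨fun _ => trivial, fun _ hIρ => absurd h hIρ⟩
          rw [he]
          exact isOpen_univ
        · have he : {k : Fin n → ℝ | ¬ I ρ → c ρ - 1 < pair k (u ρ) ∧ pair k (u ρ) < c ρ}
              = {k | c ρ - 1 < pair k (u ρ)} ∩ {k | pair k (u ρ) < c ρ} := by
            ext k
            exact ⟨fun hk => hk h, fun hk _ => hk⟩
          rw [he]
          exact (isOpen_lt continuous_const (hcont ρ)).inter
            (isOpen_lt (hcont ρ) continuous_const)
      have hxV : x ∈ V := by
        intro ρ hρ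
        exact ⟨((hSiff _).mp hx ρ).1, (hSmem x hx ρ).2 hρ⟩
      have hWopen : IsOpen (Subtype.val ⁻¹' V : Set (affineSpan ℝ (closure S))) :=
        hVopen.preimage continuous_subtype_val
      have hsub : (Subtype.val ⁻¹' V : Set (affineSpan ℝ (closure S)))
          ⊆ Subtype.val ⁻¹' closure S := by
        intro z hz
        have hzA : (z : Fin n → ℝ) ∈ (A : Set (Fin n → ℝ)) := hspanA z.2
        have hzS : (z : Fin n → ℝ) ∈ S := by
          refine (hSiff _).mpr fun ρ => ?_
          by_cases h : I ρ
          · have := hzA ρ h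
            constructor <;> [linarith; linarith]
          · obtain ⟨h1, h2⟩ := hz ρ h
            exact ⟨h1, le_of_lt h2⟩
        exact subset_closure hzS
      exact (hWopen.subset_interior_iff.mpr hsub) hxV
    · -- relint (closure S) ⊆ S
      intro hx
      rw [mem_intrinsicInterior] at hx
      obtain ⟨y, hy, rfl⟩ := hx
      obtain ⟨k₀, hk₀⟩ := hne
      have hycl : (y : Fin n → ℝ) ∈ closure S := Set.mem_preimage.mp (interior_subset hy)
      refine (hSiff _).mpr fun ρ => ?_
      refine ⟨?_, (hclosed2 ρ hycl).2⟩
      by_contra hcon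
      push_neg at hcon
      have heq : pair (y : Fin n → ℝ) (u ρ) = c ρ - 1 :=
        le_antisymm hcon (hclosed2 ρ hycl).1
      have hk₀span : k₀ ∈ affineSpan ℝ (closure S) :=
        subset_affineSpan ℝ _ (subset_closure hk₀)
      have hmemγ : ∀ t : ℝ, t • ((y : Fin n → ℝ) - k₀) + (y : Fin n → ℝ)
          ∈ affineSpan ℝ (closure S) := by
        intro t
        have := AffineSubspace.smul_vsub_vadd_mem (affineSpan ℝ (closure S)) t
          y.2 hk₀span y.2
        simpa [vsub_eq_sub, vadd_eq_add] using this
      set γ : ℝ → (affineSpan ℝ (closure S) : Set (Fin n → ℝ)) :=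
        fun t => ⟨t • ((y : Fin n → ℝ) - k₀) + (y : Fin n → ℝ), hmemγ t⟩ with hγ
      have hγcont : Continuous γ := by
        refine Continuous.subtype_mk ?_ _
        exact (continuous_id.smul continuous_const).add continuous_const
      have hγ0 : γ 0 = y := by
        rw [hγ]
        ext1
        simp
      have hnhds : γ ⁻¹' (interior (Subtype.val ⁻¹' closure S
          : Set (affineSpan ℝ (closure S)))) ∈ nhds (0 : ℝ) :=
        hγcont.continuousAt.preimage_mem_nhds (isOpen_interior.mem_nhds (by rw [hγ0]; exact hy))
      obtain ⟨t, htU, htpos⟩ := Filter.nonempty_of_mem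
        (Filter.inter_mem (nhdsWithin_le_nhds hnhds) self_mem_nhdsWithin :
          _ ∈ nhdsWithin (0 : ℝ) (Set.Ioi 0))
      have htpos' : (0 : ℝ) < t := htpos
      have hγcl : (γ t : Fin n → ℝ) ∈ closure S :=
        Set.mem_preimage.mp (interior_subset (Set.mem_preimage.mp htU))
      have hge := (hclosed2 ρ hγcl).1
      have hval : pair (γ t : Fin n → ℝ) (u ρ)
          = t * (pair (y : Fin n → ℝ) (u ρ) - pair k₀ (u ρ)) + pair (y : Fin n → ℝ) (u ρ) := by
        show pair (t • ((y : Fin n → ℝ) - k₀) + (y : Fin n → ℝ)) (u ρ) = _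
        rw [hadd, hsmul, hsub]
      have hk0ρ : c ρ - 1 < pair k₀ (u ρ) := ((hSiff _).mp hk₀ ρ).1
      rw [hval, heq] at hge
      nlinarith
  · rw [Set.not_nonempty_iff_eq_empty] at hne
    rw [hne, closure_empty, intrinsicInterior_empty]
end
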